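/- arXiv:1802.05791 — 2 statements merged into one kernel-verified Lean document; each statement's English description precedes it below -/
import Mathlib

section
/- Let f : ℕ → ℕ be finitely supported and δ > 0. Then the sparsified function f̃ is nondecreasing, and its discrete derivative F, defined by F(0) = f̃(0) and F(x) = f̃(x) − f̃(x−1) for x > 0, satisfies ΣF(x) = f̃(x) for all x; consequently F is a (1+δ)-sum approximation of f. -/
open Classical

/-- Prefix sum: `psum f x = ∑_{y ≤ x} f y`. -/
def psum (f : ℕ → ℕ) (x : ℕ) : ℕ := ∑ y ∈ Finset.range (x + 1), f y

/-- Threshold sequence: `r 0 = 0`, `r (i+1) = max (r i + 1) ⌊(1+δ)·r i⌋`. -/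
noncomputable def rseq (δ : ℝ) : ℕ → ℕ
  | 0 => 0
  | i + 1 => max (rseq δ i + 1) ⌊(1 + δ) * (rseq δ i : ℝ)⌋₊

/-- The set of breakpoints: for every index `i` such that some `x` has
`Σf(x) ≥ r_i`, the least such `x` is a breakpoint. -/
noncomputable def breakpoints (f : ℕ → ℕ) (δ : ℝ) : Set ℕ :=
  {b | ∃ i, (∃ x, rseq δ i ≤ psum f x) ∧ b = sInf {x | rseq δ i ≤ psum f x}}

/-- The sparsified function `f̃`: if some breakpoint lies strictly above `x`,
`f̃(x) = Σf(succ(x) - 1)` where `succ(x)` is the least breakpoint `> x`;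
otherwise `f̃(x) = M`, the total sum of `f`. -/

lemma psum_mono (f : ℕ → ℕ) : Monotone (psum f) := by
  intro a b hab
  apply Finset.sum_le_sum_of_subset
  exact Finset.range_subset_range.mpr (by omega)

lemma psum_le_total (f : ℕ →₀ ℕ) (x : ℕ) : psum f x ≤ ∑ y ∈ f.support, f y := by
  classical
  have h1 : psum f x ≤ ∑ y ∈ Finset.range (x+1) ∪ f.support, f y :=
    Finset.sum_le_sum_of_subset Finset.subset_union_left
  have h2 : ∑ y ∈ Finset.range (x+1) ∪ f.support, f y = ∑ y ∈ f.support, f y := by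
    apply (Finset.sum_subset Finset.subset_union_right ?_).symm
    intro y _ hy
    exact Finsupp.notMem_support_iff.mp hy
  omega

lemma exists_psum_total (f : ℕ →₀ ℕ) : ∃ y, psum f y = ∑ y ∈ f.support, f y := by
  classical
  refine ⟨f.support.sup id, ?_⟩
  rw [psum]
  refine (Finset.sum_subset ?_ ?_).symm
  · intro y hy
    have : id y ≤ f.support.sup id := Finset.le_sup hy
    simp only [Finset.mem_range, id] at *
    omega
  · intro y _ hy
    exact Finsupp.notMem_support_iff.mp hy

noncomputable def sparsified (f : ℕ →₀ ℕ) (δ : ℝ) (x : ℕ) : ℕ :=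
  if (breakpoints f δ ∩ Set.Ioi x).Nonempty then
    psum f (sInf (breakpoints f δ ∩ Set.Ioi x) - 1)
  else ∑ y ∈ f.support, f y

/-- The discrete derivative of the sparsified function:
`F(0) = f̃(0)` and `F(x) = f̃(x) − f̃(x−1)` for `x > 0`. -/

noncomputable def sparsifiedDeriv (f : ℕ →₀ ℕ) (δ : ℝ) (x : ℕ) : ℕ :=
  if x = 0 then sparsified f δ 0 else sparsified f δ x - sparsified f δ (x - 1)

theorem sparsifiedDeriv_sum_approx (f : ℕ →₀ ℕ) (δ : ℝ) (hδ : 0 < δ) :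
    Monotone (sparsified f δ) ∧
    (∀ x, psum (sparsifiedDeriv f δ) x = sparsified f δ x) ∧
    (∀ x, psum f x ≤ psum (sparsifiedDeriv f δ) x ∧
      (psum (sparsifiedDeriv f δ) x : ℝ) ≤ (1 + δ) * psum f x) := by
  have hmono_r : ∀ i, rseq δ i + 1 ≤ rseq δ (i+1) := fun i => le_max_left _ _
  have hr_ge : ∀ i, i ≤ rseq δ i := by
    intro i; induction i with
    | zero => simp
    | succ n ih => exact le_trans (Nat.succ_le_succ ih) (hmono_r n)
  set M := ∑ y ∈ f.support, f y with hM
  have hle_M : ∀ x, psum f x ≤ M := psum_le_total f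
  have hsp_le_M : ∀ x, sparsified f δ x ≤ M := by
    intro x; rw [sparsified]; split
    · exact hle_M _
    · exact le_rfl
  obtain ⟨y₀, hy₀⟩ : ∃ y, psum f y = M := exists_psum_total f
  have hmono : Monotone (sparsified f δ) := by
    intro a b hab
    by_cases hb : (breakpoints f δ ∩ Set.Ioi b).Nonempty
    · have hsub : breakpoints f δ ∩ Set.Ioi b ⊆ breakpoints f δ ∩ Set.Ioi a := by
        rintro z ⟨h1, h2⟩
        exact ⟨h1, lt_of_le_of_lt hab h2⟩
      have ha : (breakpoints f δ ∩ Set.Ioi a).Nonempty := hb.mono hsub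
      rw [sparsified, if_pos ha, sparsified, if_pos hb]
      apply psum_mono f
      apply Nat.sub_le_sub_right
      exact Nat.sInf_le (hsub (Nat.sInf_mem hb))
    · have hb2 : sparsified f δ b = M := by rw [sparsified, if_neg hb]
      rw [hb2]
      exact hsp_le_M a
  have hsum : ∀ x, psum (sparsifiedDeriv f δ) x = sparsified f δ x := by
    intro x; induction x with
    | zero => simp [psum, sparsifiedDeriv]
    | succ n ih =>
      rw [psum, Finset.sum_range_succ, ← psum, ih, sparsifiedDeriv]
      simp only [Nat.succ_ne_zero, if_false, Nat.succ_sub_one]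
      exact Nat.add_sub_cancel' (hmono (Nat.le_succ n))
  refine ⟨hmono, hsum, ?_⟩
  intro x
  rw [hsum]
  constructor
  · by_cases h : (breakpoints f δ ∩ Set.Ioi x).Nonempty
    · rw [sparsified, if_pos h]
      apply psum_mono
      have hx := (Nat.sInf_mem h).2
      simp only [Set.mem_Ioi] at hx
      omega
    · rw [sparsified, if_neg h]
      exact hle_M x
  · set s := psum f x with hs
    have hex : ∃ j, s < rseq δ j := ⟨s+1, lt_of_lt_of_le (Nat.lt_succ_self s) (hr_ge (s+1))⟩
    set j := Nat.find hex with hjdef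
    have hj : s < rseq δ j := Nat.find_spec hex
    have hj0 : j ≠ 0 := by
      intro h
      rw [h] at hj
      simp [rseq] at hj
    have hi : rseq δ (j-1) ≤ s := le_of_not_gt (Nat.find_min hex (by omega))
    have key : sparsified f δ x < rseq δ j := by
      by_cases hS : ({y | rseq δ j ≤ psum f y}).Nonempty
      · have hbmem : rseq δ j ≤ psum f (sInf {y | rseq δ j ≤ psum f y}) := Nat.sInf_mem hS
        set b := sInf {y | rseq δ j ≤ psum f y} with hbdef
        have hbx : x < b := by
          by_contra hc
          push_neg at hc
          exact absurd (le_trans hbmem (psum_mono f hc)) (by omega)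
        have hbbp : b ∈ breakpoints f δ := ⟨j, hS, rfl⟩
        have hne : (breakpoints f δ ∩ Set.Ioi x).Nonempty := ⟨b, hbbp, hbx⟩
        rw [sparsified, if_pos hne]
        have hc : sInf (breakpoints f δ ∩ Set.Ioi x) ≤ b := Nat.sInf_le ⟨hbbp, hbx⟩
        calc psum f (sInf (breakpoints f δ ∩ Set.Ioi x) - 1)
            ≤ psum f (b-1) := psum_mono f (by omega)
          _ < rseq δ j := by
              by_contra hcc
              push_neg at hcc
              have : b ≤ b - 1 := Nat.sInf_le hcc
              omega
      · rw [Set.not_nonempty_iff_eq_empty] at hS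
        have hMlt : M < rseq δ j := by
          by_contra hc
          push_neg at hc
          have : y₀ ∈ ({y | rseq δ j ≤ psum f y} : Set ℕ) := by
            simp only [Set.mem_setOf_eq, hy₀]
            exact hc
          rw [hS] at this
          exact this
        exact lt_of_le_of_lt (hsp_le_M x) hMlt
    have hjj : rseq δ j = max (rseq δ (j-1) + 1) ⌊(1+δ) * (rseq δ (j-1) : ℝ)⌋₊ := by
      conv_lhs => rw [show j = (j-1)+1 by omega]
      simp [rseq]
    rw [hjj] at key
    have hs1 : (rseq δ (j-1) : ℝ) ≤ (s : ℝ) := by exact_mod_cast hi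
    have hr0 : (0:ℝ) ≤ (rseq δ (j-1) : ℝ) := Nat.cast_nonneg _
    have hs0 : (0:ℝ) ≤ (s : ℝ) := Nat.cast_nonneg _
    rcases lt_max_iff.mp key with h | h
    · have h1 : sparsified f δ x ≤ s := by omega
      have h2 : (sparsified f δ x : ℝ) ≤ (s : ℝ) := by exact_mod_cast h1
      nlinarith
    · have h1 : (sparsified f δ x : ℝ) < (⌊(1+δ) * (rseq δ (j-1) : ℝ)⌋₊ : ℝ) := by
        exact_mod_cast h
      have h2 : (⌊(1+δ) * (rseq δ (j-1) : ℝ)⌋₊ : ℝ) ≤ (1+δ) * (rseq δ (j-1) : ℝ) :=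
        Nat.floor_le (by nlinarith)
      nlinarith
end

section
/- Let A and B be disjoint finite index sets with weights w : A ∪ B → ℕ, and let ε > 0. If F is a (1+ε)-sum approximation of k_A and G is a (1+ε)-sum approximation of k_B, then the convolution F ∗ G is a (1+ε)²-sum approximation of k_{A ∪ B}. -/
/-- Convolution: `(f ∗ g)(w) = ∑_{x+y=w} f(x)·g(y)`. -/
def conv (f g : ℕ → ℕ) (w : ℕ) : ℕ := ∑ x ∈ Finset.range (w + 1), f x * g (w - x)

/-- `F` is a `(1+ε)`-sum approximation of `f`:
`Σf(x) ≤ ΣF(x) ≤ (1+ε)·Σf(x)` for all `x`. -/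
def IsSumApprox (ε : ℝ) (F f : ℕ → ℕ) : Prop :=
  ∀ x, (psum f x : ℝ) ≤ psum F x ∧ (psum F x : ℝ) ≤ (1 + ε) * psum f x

/-- Knapsack counting function: `knap S w x` is the number of subsets
`T ⊆ S` with total weight `∑_{i∈T} w i = x`. -/
def knap {ι : Type*} [DecidableEq ι] (S : Finset ι) (w : ι → ℕ) (x : ℕ) : ℕ :=
  (S.powerset.filter (fun T => ∑ i ∈ T, w i = x)).card

lemma conv_comm (f g : ℕ → ℕ) (v : ℕ) : conv f g v = conv g f v := by
  unfold conv
  rw [← Finset.sum_range_reflect (fun u => g u * f (v - u)) (v + 1)]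
  apply Finset.sum_congr rfl
  intro u hu
  simp only [Finset.mem_range] at hu
  have h1 : v + 1 - 1 - u = v - u := by omega
  have h2 : v - (v - u) = u := by omega
  rw [h1, h2, mul_comm]

lemma psum_conv (f g : ℕ → ℕ) (x : ℕ) :
    psum (conv f g) x = ∑ u ∈ Finset.range (x + 1), f u * psum g (x - u) := by
  induction x with
  | zero => simp [psum, conv]
  | succ n ih =>
    rw [psum, Finset.sum_range_succ, ← psum, ih,
      Finset.sum_range_succ (fun u => f u * psum g (n + 1 - u))]
    have hc : conv f g (n + 1)
        = ∑ u ∈ Finset.range (n + 1), f u * g (n + 1 - u) + f (n + 1) * g 0 := by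
      rw [conv, Finset.sum_range_succ]
      simp
    have hps : ∀ u ∈ Finset.range (n + 1),
        f u * psum g (n + 1 - u) = f u * psum g (n - u) + f u * g (n + 1 - u) := by
      intro u hu
      simp only [Finset.mem_range] at hu
      have h1 : n + 1 - u = (n - u) + 1 := by omega
      rw [h1, psum, Finset.sum_range_succ, ← psum, mul_add]
    rw [Finset.sum_congr rfl hps, Finset.sum_add_distrib, hc]
    simp [psum]
    ring

lemma psum_mono_s13 (f g : ℕ → ℕ) (h : ∀ y, f y ≤ g y) (x : ℕ) : psum f x ≤ psum g x :=
  Finset.sum_le_sum fun y _ => h y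

lemma indic (p q x : ℕ) :
    ∑ a ∈ Finset.range (x + 1),
      (if p = a then (1:ℕ) else 0) * (if q = x - a then 1 else 0)
    = if p + q = x then 1 else 0 := by
  by_cases h : p + q = x
  · rw [if_pos h, Finset.sum_eq_single p]
    · have h2 : q = x - p := by omega
      simp [h2]
    · intro b _ hne
      have : ¬ p = b := fun hh => hne hh.symm
      simp [this]
    · intro hp
      simp only [Finset.mem_range] at hp
      omega
  · rw [if_neg h]
    apply Finset.sum_eq_zero
    intro a ha
    simp only [Finset.mem_range] at ha
    by_cases h1 : p = a
    · by_cases h2 : q = x - a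
      · omega
      · simp [h2]
    · simp [h1]
lemma knap_union {ι : Type*} [DecidableEq ι] (A B : Finset ι) (hAB : Disjoint A B)
    (w : ι → ℕ) (x : ℕ) : knap (A ∪ B) w x = conv (knap A w) (knap B w) x := by
  have hk : ∀ (S : Finset ι) (y : ℕ), knap S w y
      = ∑ T ∈ S.powerset, if ∑ i ∈ T, w i = y then 1 else 0 := by
    intro S y; rw [knap, Finset.card_filter]
  have key : knap (A ∪ B) w x
      = ∑ P ∈ A.powerset, ∑ Q ∈ B.powerset,
          if (∑ i ∈ P, w i) + (∑ i ∈ Q, w i) = x then 1 else 0 := by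
    rw [hk, ← Finset.sum_product']
    apply Finset.sum_nbij' (fun T => (T ∩ A, T ∩ B)) (fun PQ => PQ.1 ∪ PQ.2)
    · intro T hT
      simp only [Finset.mem_powerset] at hT
      simp only [Finset.mem_product, Finset.mem_powerset]
      exact ⟨Finset.inter_subset_right, Finset.inter_subset_right⟩
    · intro PQ hPQ
      simp only [Finset.mem_product, Finset.mem_powerset] at hPQ
      simp only [Finset.mem_powerset]
      exact Finset.union_subset_union hPQ.1 hPQ.2
    · intro T hT
      simp only [Finset.mem_powerset] at hT
      rw [← Finset.inter_union_distrib_left, Finset.inter_eq_left.mpr hT]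
    · intro PQ hPQ
      simp only [Finset.mem_product, Finset.mem_powerset] at hPQ
      have h1 : (PQ.1 ∪ PQ.2) ∩ A = PQ.1 := by
        rw [Finset.union_inter_distrib_right, Finset.inter_eq_left.mpr hPQ.1,
          Finset.disjoint_iff_inter_eq_empty.mp (hAB.symm.mono_left hPQ.2),
          Finset.union_empty]
      have h2 : (PQ.1 ∪ PQ.2) ∩ B = PQ.2 := by
        rw [Finset.union_inter_distrib_right, Finset.inter_eq_left.mpr hPQ.2,
          Finset.disjoint_iff_inter_eq_empty.mp (hAB.mono_left hPQ.1),
          Finset.empty_union]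
      exact Prod.ext h1 h2
    · intro T hT
      simp only [Finset.mem_powerset] at hT
      have hdisj : Disjoint (T ∩ A) (T ∩ B) :=
        hAB.mono Finset.inter_subset_right Finset.inter_subset_right
      have hu : T ∩ A ∪ T ∩ B = T := by
        rw [← Finset.inter_union_distrib_left, Finset.inter_eq_left.mpr hT]
      have hsum : ∑ i ∈ T, w i = ∑ i ∈ T ∩ A, w i + ∑ i ∈ T ∩ B, w i := by
        rw [← Finset.sum_union hdisj, hu]
      rw [hsum]
  have e1 : ∀ a, knap A w a * knap B w (x - a)
      = ∑ P ∈ A.powerset, ∑ Q ∈ B.powerset,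
          (if ∑ i ∈ P, w i = a then (1:ℕ) else 0) * (if ∑ i ∈ Q, w i = x - a then 1 else 0) := by
    intro a
    rw [hk, hk, Finset.sum_mul_sum]
  have e2 : conv (knap A w) (knap B w) x
      = ∑ P ∈ A.powerset, ∑ Q ∈ B.powerset, ∑ a ∈ Finset.range (x + 1),
          (if ∑ i ∈ P, w i = a then (1:ℕ) else 0) * (if ∑ i ∈ Q, w i = x - a then 1 else 0) := by
    rw [conv]
    simp only [e1]
    rw [Finset.sum_comm]
    apply Finset.sum_congr rfl
    intro P _
    rw [Finset.sum_comm]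
  rw [key, e2]
  apply Finset.sum_congr rfl
  intro P _
  apply Finset.sum_congr rfl
  intro Q _
  rw [indic]

lemma psum_conv_real (f g : ℕ → ℕ) (x : ℕ) :
    (psum (conv f g) x : ℝ) = ∑ u ∈ Finset.range (x + 1), (f u : ℝ) * (psum g (x - u) : ℝ) := by
  rw [psum_conv]; push_cast; rfl

lemma psum_conv_comm (f g : ℕ → ℕ) (x : ℕ) :
    psum (conv f g) x = psum (conv g f) x :=
  Finset.sum_congr rfl fun y _ => conv_comm f g y


theorem knap_union_conv_sum_approx {ι : Type*} [DecidableEq ι]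
    (A B : Finset ι) (hAB : Disjoint A B) (w : ι → ℕ) (ε : ℝ) (hε : 0 < ε)
    (F G : ℕ → ℕ) (hF : IsSumApprox ε F (knap A w))
    (hG : IsSumApprox ε G (knap B w)) :
    ∀ x, (psum (knap (A ∪ B) w) x : ℝ) ≤ psum (conv F G) x ∧
      (psum (conv F G) x : ℝ) ≤ (1 + ε) ^ 2 * psum (knap (A ∪ B) w) x := by
  intro x
  set kA := knap A w with hkA
  set kB := knap B w with hkB
  have hεn : (0:ℝ) ≤ 1 + ε := by linarith
  have hpk : psum (knap (A ∪ B) w) x = psum (conv kA kB) x :=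
    Finset.sum_congr rfl fun y _ => knap_union A B hAB w y
  have hFn : ∀ y, psum kA y ≤ psum F y := fun y => by exact_mod_cast (hF y).1
  have hGn : ∀ y, psum kB y ≤ psum G y := fun y => by exact_mod_cast (hG y).1
  constructor
  · rw [hpk]
    have low : psum (conv kA kB) x ≤ psum (conv F G) x := by
      calc psum (conv kA kB) x
          = ∑ u ∈ Finset.range (x + 1), kA u * psum kB (x - u) := psum_conv kA kB x
        _ ≤ ∑ u ∈ Finset.range (x + 1), kA u * psum G (x - u) :=
            Finset.sum_le_sum fun u _ => Nat.mul_le_mul_left _ (hGn _)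
        _ = psum (conv kA G) x := (psum_conv kA G x).symm
        _ = psum (conv G kA) x := psum_conv_comm kA G x
        _ = ∑ v ∈ Finset.range (x + 1), G v * psum kA (x - v) := psum_conv G kA x
        _ ≤ ∑ v ∈ Finset.range (x + 1), G v * psum F (x - v) :=
            Finset.sum_le_sum fun v _ => Nat.mul_le_mul_left _ (hFn _)
        _ = psum (conv G F) x := (psum_conv G F x).symm
        _ = psum (conv F G) x := psum_conv_comm G F x
    exact_mod_cast low
  · rw [hpk]
    calc (psum (conv F G) x : ℝ)
        = ∑ u ∈ Finset.range (x + 1), (F u : ℝ) * (psum G (x - u) : ℝ) :=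
          psum_conv_real F G x
      _ ≤ ∑ u ∈ Finset.range (x + 1), (F u : ℝ) * ((1 + ε) * (psum kB (x - u) : ℝ)) :=
          Finset.sum_le_sum fun u _ =>
            mul_le_mul_of_nonneg_left (hG (x - u)).2 (Nat.cast_nonneg _)
      _ = (1 + ε) * ∑ u ∈ Finset.range (x + 1), (F u : ℝ) * (psum kB (x - u) : ℝ) := by
          rw [Finset.mul_sum]; exact Finset.sum_congr rfl fun u _ => by ring
      _ = (1 + ε) * (psum (conv F kB) x : ℝ) := by rw [psum_conv_real]
      _ = (1 + ε) * (psum (conv kB F) x : ℝ) := by rw [psum_conv_comm F kB]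
      _ = (1 + ε) * ∑ v ∈ Finset.range (x + 1), (kB v : ℝ) * (psum F (x - v) : ℝ) := by
          rw [psum_conv_real]
      _ ≤ (1 + ε) * ∑ v ∈ Finset.range (x + 1), (kB v : ℝ) * ((1 + ε) * (psum kA (x - v) : ℝ)) := by
          apply mul_le_mul_of_nonneg_left _ hεn
          exact Finset.sum_le_sum fun v _ =>
            mul_le_mul_of_nonneg_left (hF (x - v)).2 (Nat.cast_nonneg _)
      _ = (1 + ε) ^ 2 * ∑ v ∈ Finset.range (x + 1), (kB v : ℝ) * (psum kA (x - v) : ℝ) := by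
          rw [Finset.mul_sum, Finset.mul_sum]
          exact Finset.sum_congr rfl fun v _ => by ring
      _ = (1 + ε) ^ 2 * (psum (conv kB kA) x : ℝ) := by rw [psum_conv_real]
      _ = (1 + ε) ^ 2 * (psum (conv kA kB) x : ℝ) := by rw [psum_conv_comm kB kA]
end
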